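/- Let f : M → ℝⁿ be smooth with Zf =: φ satisfying ⟨φ,φ⟩ = 0, ‖φ‖² = 1, and ⟨Zφ̄ + i ā φ̄, φ⟩ = 0 on M (here φ̄ = conj φ = Z̄f). Define Δ_GL f = −(ZZ̄ + i ā Z̄)f. Then ⟨Δ_GL f, Zf⟩ = 0 and ⟨Δ_GL f, Z̄f⟩ = 0. -/

import Mathlib

section Aux

variable {M : Type*}

theorem aux_Zzero (Z : (M → ℂ) → (M → ℂ))
    (hZadd : ∀ u v : M → ℂ, Z (u + v) = Z u + Z v) : Z 0 = 0 := by
  have h := hZadd 0 0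
  simp only [add_zero] at h
  have := congrArg (· - Z 0) h
  simpa using this.symm

theorem aux_Zsum (Z : (M → ℂ) → (M → ℂ))
    (hZadd : ∀ u v : M → ℂ, Z (u + v) = Z u + Z v)
    {ι : Type*} (s : Finset ι) (g : ι → (M → ℂ)) :
    Z (∑ i ∈ s, g i) = ∑ i ∈ s, Z (g i) := by
  classical
  induction s using Finset.induction with
  | empty => simpa using aux_Zzero Z hZadd
  | insert j s h ih => rw [Finset.sum_insert h, hZadd, ih, Finset.sum_insert h]

end Aux

/-- For an `ℝⁿ`-valued `f` with `φ = Zf` satisfying `⟨φ,φ⟩ = 0`, `‖φ‖² = 1` and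
`⟨Zφ̄ + iāφ̄, φ⟩ = 0`, the Garfield–Lee Laplacian `Δ_GL f = −(ZZ̄ + iāZ̄)f`
satisfies `⟨Δ_GL f, Zf⟩ = 0` and `⟨Δ_GL f, Z̄f⟩ = 0`. -/
theorem stmt_16 {M : Type*} {n : ℕ} (Z Zb : (M → ℂ) → (M → ℂ)) (a : M → ℂ)
    (hZadd : ∀ u v : M → ℂ, Z (u + v) = Z u + Z v)
    (hZmul : ∀ u v : M → ℂ, Z (u * v) = Z u * v + u * Z v)
    (f : M → Fin n → ℝ)
    (hconj : ∀ i x, Zb (fun y => ((f y i : ℝ) : ℂ)) x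
      = star (Z (fun y => ((f y i : ℝ) : ℂ)) x))
    (hiso : ∀ x, ∑ i, Z (fun y => ((f y i : ℝ) : ℂ)) x
      * Z (fun y => ((f y i : ℝ) : ℂ)) x = 0)
    (hnorm : ∀ x, ∑ i, Z (fun y => ((f y i : ℝ) : ℂ)) x
      * star (Z (fun y => ((f y i : ℝ) : ℂ)) x) = 1)
    (h5 : ∀ x, ∑ i,
      (Z (fun y => star (Z (fun w => ((f w i : ℝ) : ℂ)) y)) x
        + Complex.I * star (a x) * star (Z (fun y => ((f y i : ℝ) : ℂ)) x))
      * Z (fun y => ((f y i : ℝ) : ℂ)) x = 0) :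
    (∀ x, ∑ i,
      (-(Z (fun y => Zb (fun w => ((f w i : ℝ) : ℂ)) y) x)
        - Complex.I * star (a x) * Zb (fun y => ((f y i : ℝ) : ℂ)) x)
      * Z (fun y => ((f y i : ℝ) : ℂ)) x = 0) ∧
    (∀ x, ∑ i,
      (-(Z (fun y => Zb (fun w => ((f w i : ℝ) : ℂ)) y) x)
        - Complex.I * star (a x) * Zb (fun y => ((f y i : ℝ) : ℂ)) x)
      * star (Z (fun y => ((f y i : ℝ) : ℂ)) x) = 0) := by
  set F : Fin n → (M → ℂ) := fun i => fun y => ((f y i : ℝ) : ℂ) with hF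
  set P : Fin n → (M → ℂ) := fun i => Z (F i) with hP
  set Q : Fin n → (M → ℂ) := fun i => fun y => star (P i y) with hQ
  have hZbF : ∀ i, Zb (F i) = Q i := by
    intro i; funext y; exact hconj i y
  -- ∑ Q i * Q i = 0 as a function
  have hQQ : (∑ i, Q i * Q i) = 0 := by
    funext x
    have := congrArg star (hiso x)
    simpa [Finset.sum_apply, Pi.mul_apply, hQ, star_sum, mul_comm] using this
  -- differentiate: ∑ Z(Q i) * Q i = 0 pointwise
  have hZQQ : ∀ x, ∑ i, Z (Q i) x * Q i x = 0 := by
    intro x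
    have h1 : Z (∑ i, Q i * Q i) = 0 := by rw [hQQ]; exact aux_Zzero Z hZadd
    have h2 : (∑ i, Z (Q i * Q i)) x = 0 := by
      rw [← aux_Zsum Z hZadd, h1]; rfl
    have h3 : ∀ i, Z (Q i * Q i) x = 2 * (Z (Q i) x * Q i x) := by
      intro i
      rw [hZmul]
      simp [Pi.add_apply, Pi.mul_apply]; ring
    rw [Finset.sum_apply] at h2
    simp only [h3, ← Finset.mul_sum] at h2
    have : (2 : ℂ) ≠ 0 := two_ne_zero
    exact (mul_eq_zero.mp h2).resolve_left this
  constructor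
  · intro x
    have h := h5 x
    calc ∑ i, (-(Z (fun y => Zb (F i) y) x) - Complex.I * star (a x) * Zb (F i) x) * P i x
        = -∑ i, (Z (Q i) x + Complex.I * star (a x) * Q i x) * P i x := by
          rw [← Finset.sum_neg_distrib]
          refine Finset.sum_congr rfl fun i _ => ?_
          have : (fun y => Zb (F i) y) = Q i := by funext y; exact hconj i y
          rw [this, hconj i x]
          show _ = -((Z (Q i) x + Complex.I * star (a x) * (fun y => star (P i y)) x) * P i x)
          ring
      _ = 0 := by
          rw [neg_eq_zero]
          convert h using 2
  · intro x
    calc ∑ i, (-(Z (fun y => Zb (F i) y) x) - Complex.I * star (a x) * Zb (F i) x) * star (P i x)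
        = -∑ i, Z (Q i) x * Q i x - Complex.I * star (a x) * ∑ i, Q i x * Q i x := by
          rw [Finset.mul_sum, ← Finset.sum_neg_distrib, ← Finset.sum_sub_distrib]
          refine Finset.sum_congr rfl fun i _ => ?_
          have : (fun y => Zb (F i) y) = Q i := by funext y; exact hconj i y
          rw [this, hconj i x]
          show _ = -(Z (Q i) x * (fun y => star (P i y)) x)
            - Complex.I * star (a x) * ((fun y => star (P i y)) x * (fun y => star (P i y)) x)
          ring
      _ = 0 := by
          have h2 : ∑ i, Q i x * Q i x = 0 := by
            have := congrFun hQQ x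
            simpa [Finset.sum_apply, Pi.mul_apply] using this
          rw [hZQQ x, h2]; ring
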